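/- Let φ: E → G be a ℤ-central extension of a finitely generated group G, with kernel generated by t. Suppose E acts by isometries on a geodesic space L quasi-isometric to ℝ, with τ_L(t) > 0. Then the diagonal action of E on G × L (with the ℓ¹-product metric, where G carries a word metric) is metrically proper and cobounded. -/

import Mathlib

open Filter Topology

/-- Word length of `g` with respect to a (symmetrised) generating set `S`. -/
noncomputable def wordLength {G : Type*} [Group G] (S : Set G) (g : G) : ℕ :=
  sInf {n : ℕ | ∃ l : List G, l.length = n ∧ (∀ s ∈ l, s ∈ S ∨ s⁻¹ ∈ S) ∧ l.prod = g}

private lemma bset_finite {G : Type*} [Group G] (S : Set G) (hSfin : S.Finite) :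
    ∀ n : ℕ,
      {g : G | ∃ l : List G, l.length ≤ n ∧ (∀ s ∈ l, s ∈ S ∨ s⁻¹ ∈ S) ∧ l.prod = g}.Finite := by
  intro n
  induction n with
  | zero =>
    apply Set.Finite.subset (Set.finite_singleton (1 : G))
    rintro g ⟨l, hlen, -, hprod⟩
    rw [Nat.le_zero, List.length_eq_zero_iff] at hlen
    simp [hlen] at hprod
    simp [← hprod]
  | succ n ih =>
    have hT : {s : G | s ∈ S ∨ s⁻¹ ∈ S}.Finite := by
      have : {s : G | s ∈ S ∨ s⁻¹ ∈ S} = S ∪ (fun x : G => x⁻¹) ⁻¹' S := by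
        ext x; simp [Set.mem_preimage]
      rw [this]
      exact hSfin.union (hSfin.preimage (fun a _ b _ h => by simpa using congrArg (·⁻¹) h))
    apply Set.Finite.subset (ih.union (Set.Finite.image2 (· * ·) hT ih))
    rintro g ⟨l, hlen, hmem, hprod⟩
    match l with
    | [] => exact Or.inl ⟨[], by simp, by simp, hprod⟩
    | x :: xs =>
      right
      refine Set.mem_image2.mpr ⟨x, hmem x (by simp), xs.prod,
        ⟨xs, ?_, fun s hs => hmem s (by simp [hs]), rfl⟩, by simpa using hprod⟩
      simpa using Nat.succ_le_succ_iff.mp hlen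

private lemma wordBall_finite {G : Type*} [Group G] (S : Set G) (hSfin : S.Finite)
    (hSgen : Subgroup.closure S = ⊤) (n : ℕ) :
    {g : G | wordLength S g ≤ n}.Finite := by
  apply Set.Finite.subset (bset_finite S hSfin n)
  intro g hg
  have hmem : g ∈ Submonoid.closure (S ∪ S⁻¹) := by
    rw [← Subgroup.closure_toSubmonoid]
    have : g ∈ Subgroup.closure S := by rw [hSgen]; trivial
    exact this
  obtain ⟨l, hl, hlp⟩ := Submonoid.exists_list_of_mem_closure hmem
  have hne : (wordLength S g) ∈
      {m : ℕ | ∃ l : List G, l.length = m ∧ (∀ s ∈ l, s ∈ S ∨ s⁻¹ ∈ S) ∧ l.prod = g} := by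
    apply Nat.sInf_mem
    exact ⟨l.length, l, rfl, fun s hs => by
      rcases hl s hs with h | h
      · exact Or.inl h
      · exact Or.inr (Set.mem_inv.mp h), hlp⟩
  obtain ⟨l', hlen, hmem', hprod⟩ := hne
  exact ⟨l', hlen.le.trans hg, hmem', hprod⟩

private lemma discrete_ivt (f : ℕ → ℝ) (m : ℕ) (D : ℝ) (hD : 0 ≤ D)
    (hstep : ∀ i, i < m → |f (i + 1) - f i| ≤ D)
    (r : ℝ) (h0 : f 0 ≤ r) (hm : r ≤ f m) : ∃ i, i ≤ m ∧ |f i - r| ≤ D := by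
  by_contra h
  push_neg at h
  have key : ∀ i, i ≤ m → f i < r := by
    intro i
    induction i with
    | zero =>
      intro hi
      rcases lt_or_eq_of_le h0 with h' | h'
      · exact h'
      · exfalso; have := h 0 hi; rw [h'] at this; simp at this; linarith
    | succ i ih =>
      intro hi
      have hii : i ≤ m := Nat.le_of_succ_le hi
      have h1 := ih hii
      have h2 := h i hii
      have h3 : f i < r - D := by
        rcases abs_cases (f i - r) with ⟨he, -⟩ | ⟨he, -⟩ <;> linarith
      have h4 := hstep i (Nat.lt_of_succ_le hi)
      have h5 := le_abs_self (f (i + 1) - f i)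
      linarith
  linarith [key m le_rfl]

private lemma quasiline_between {L : Type*} [MetricSpace L]
    (hgeo : ∀ x y : L, ∃ c : ℝ → L, c 0 = x ∧ c (dist x y) = y ∧
      ∀ s ∈ Set.Icc (0 : ℝ) (dist x y), ∀ u ∈ Set.Icc (0 : ℝ) (dist x y),
        dist (c s) (c u) = |s - u|)
    (K : ℝ) (hK : 1 ≤ K) (q : L → ℝ)
    (hqup : ∀ x y : L, |q x - q y| ≤ K * dist x y + K)
    (hqlow : ∀ x y : L, (1 / K) * dist x y - K ≤ |q x - q y|)
    (x u w : L) (h1 : q x ≤ q u) (h2 : q u ≤ q w) :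
    dist x u + dist u w ≤ dist x w + 6 * (K * K) := by
  have hKpos : (0 : ℝ) < K := lt_of_lt_of_le one_pos hK
  obtain ⟨c, hc0, hcd, hcdist⟩ := hgeo x w
  set d := dist x w with hd
  have hd0 : (0 : ℝ) ≤ d := dist_nonneg
  set m := ⌈d⌉₊ with hm
  set f : ℕ → ℝ := fun i => q (c (min (i : ℝ) d)) with hf
  have hmem : ∀ i : ℕ, min (i : ℝ) d ∈ Set.Icc (0 : ℝ) d :=
    fun i => ⟨le_min (Nat.cast_nonneg i) hd0, min_le_right _ _⟩
  have hf0 : f 0 = q x := by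
    simp only [hf, Nat.cast_zero, min_eq_left hd0, hc0]
  have hfm : f m = q w := by
    simp only [hf, hm, min_eq_right (Nat.le_ceil d), hcd]
  have hstep : ∀ i, i < m → |f (i + 1) - f i| ≤ K + K := by
    intro i _
    have hdist : dist (c (min ((i : ℝ) + 1) d)) (c (min (i : ℝ) d))
        = |min ((i : ℝ) + 1) d - min (i : ℝ) d| := by
      have := hcdist _ (by exact_mod_cast hmem (i + 1)) _ (hmem i)
      push_cast at this ⊢
      exact this
    have hup : min ((i : ℝ) + 1) d ≤ min (i : ℝ) d + 1 := by
      have h' : min ((i : ℝ) + 1) (d + 1) = min (i : ℝ) d + 1 := by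
        rw [← min_add_add_right]
      calc min ((i : ℝ) + 1) d ≤ min ((i : ℝ) + 1) (d + 1) := min_le_min le_rfl (by linarith)
        _ = min (i : ℝ) d + 1 := h'
    have hlo : min (i : ℝ) d ≤ min ((i : ℝ) + 1) d := min_le_min (by linarith) le_rfl
    have habs : |min ((i : ℝ) + 1) d - min (i : ℝ) d| ≤ 1 := abs_le.mpr ⟨by linarith, by linarith⟩
    calc |f (i + 1) - f i| ≤ K * dist (c (min ((i : ℝ) + 1) d)) (c (min (i : ℝ) d)) + K := by
          have := hqup (c (min ((i : ℝ) + 1) d)) (c (min (i : ℝ) d))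
          simp only [hf]
          push_cast
          exact this
      _ ≤ K * 1 + K := by
          rw [hdist]
          have := mul_le_mul_of_nonneg_left habs (le_of_lt hKpos)
          linarith
      _ = K + K := by ring
  obtain ⟨i, him, hiq⟩ := discrete_ivt f m (K + K) (by linarith) hstep (q u)
    (by rw [hf0]; exact h1) (by rw [hfm]; exact h2)
  set s := min (i : ℝ) d with hs
  set v := c s with hv
  have hxv : dist x v = s := by
    have := hcdist 0 ⟨le_rfl, hd0⟩ s (hmem i)
    rw [hc0] at this
    rw [hv, this, zero_sub, abs_neg, abs_of_nonneg (hmem i).1]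
  have hvw : dist v w = d - s := by
    have := hcdist s (hmem i) d ⟨hd0, le_rfl⟩
    rw [hcd] at this
    rw [hv, this, abs_of_nonpos (by linarith [(hmem i).2])]
    ring
  have huv : dist u v ≤ 3 * (K * K) := by
    have hl := hqlow u v
    have h2' : |q u - q v| ≤ K + K := by
      have hqv : q v = f i := rfl
      rw [abs_sub_comm, hqv]
      exact hiq
    have h3 : (1 / K) * dist u v ≤ 3 * K := by linarith
    have h4 : dist u v / K ≤ 3 * K := by rw [div_eq_mul_one_div, mul_comm]; exact h3
    calc dist u v = dist u v / K * K := by field_simp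
      _ ≤ 3 * K * K := mul_le_mul_of_nonneg_right h4 (le_of_lt hKpos)
      _ = 3 * (K * K) := by ring
  have t1 : dist x u ≤ s + dist u v := by
    calc dist x u ≤ dist x v + dist v u := dist_triangle x v u
      _ = s + dist u v := by rw [hxv, dist_comm]
  have t2 : dist u w ≤ dist u v + (d - s) := by
    calc dist u w ≤ dist u v + dist v w := dist_triangle u v w
      _ = dist u v + (d - s) := by rw [hvw]
  linarith

set_option maxHeartbeats 1600000 in
/-- Let `φ : E → G` be a `ℤ`-central extension of a finitely generated group `G`, and
suppose `E` acts by isometries on a geodesic space `L` quasi-isometric to `ℝ` with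
`τ_L(t) > 0` for `t` generating the kernel. Then the diagonal action of `E` on `G × L`
with the `ℓ¹`-product of a word metric and the metric of `L` is metrically proper and
cobounded. -/
theorem central_extension_quasiline_action_proper_cobounded
    {E G L : Type*} [Group E] [Group G] [MetricSpace L] [MulAction E L]
    (hisoL : ∀ (e : E) (x y : L), dist (e • x) (e • y) = dist x y)
    (φ : E →* G) (hsurj : Function.Surjective φ)
    (t : E) (hker : φ.ker = Subgroup.zpowers t) (hcent : t ∈ Subgroup.center E)
    (S : Set G) (hSfin : S.Finite) (hSgen : Subgroup.closure S = ⊤)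
    -- L is geodesic
    (hgeo : ∀ x y : L, ∃ c : ℝ → L, c 0 = x ∧ c (dist x y) = y ∧
      ∀ s ∈ Set.Icc (0 : ℝ) (dist x y), ∀ u ∈ Set.Icc (0 : ℝ) (dist x y),
        dist (c s) (c u) = |s - u|)
    -- L is quasi-isometric to ℝ
    (K : ℝ) (hK : 1 ≤ K) (q : L → ℝ)
    (hqup : ∀ x y : L, |q x - q y| ≤ K * dist x y + K)
    (hqlow : ∀ x y : L, (1 / K) * dist x y - K ≤ |q x - q y|)
    (hqonto : ∀ r : ℝ, ∃ x : L, |q x - r| ≤ K)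
    -- τ_L(t) > 0
    (x₀ : L) (τ : ℝ) (hτpos : 0 < τ)
    (hτ : Tendsto (fun n : ℕ => dist x₀ (t ^ n • x₀) / n) atTop (𝓝 τ)) :
    -- metrically proper
    (∀ (p : G × L) (R : ℝ),
      {e : E | (wordLength S (p.1⁻¹ * (φ e * p.1)) : ℝ) + dist p.2 (e • p.2) ≤ R}.Finite) ∧
    -- cobounded
    (∃ R : ℝ, ∀ p : G × L, ∃ e : E,
      (wordLength S (p.1⁻¹ * φ e) : ℝ) + dist p.2 (e • x₀) ≤ R) := by
  have hKpos : (0 : ℝ) < K := lt_of_lt_of_le one_pos hK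
  have hφt : φ t = 1 := by
    have ht : t ∈ φ.ker := by rw [hker]; exact Subgroup.mem_zpowers t
    exact ht
  have hφtk : ∀ k : ℤ, φ (t ^ k) = 1 := fun k => by rw [map_zpow, hφt, one_zpow]
  have hcancel : ∀ (k : ℤ) (z : L), t ^ k • t ^ (-k) • z = z := by
    intro k z; rw [smul_smul, ← zpow_add, add_neg_cancel, zpow_zero, one_smul]
  have hsymm : ∀ k : ℤ, dist x₀ (t ^ (-k) • x₀) = dist x₀ (t ^ k • x₀) := by
    intro k
    have h := hisoL (t ^ k) x₀ (t ^ (-k) • x₀)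
    rw [hcancel k x₀] at h
    rw [← h, dist_comm]
  obtain ⟨N, hN⟩ := eventually_atTop.mp (hτ.eventually (eventually_gt_nhds (by linarith : τ/2 < τ)))
  set C₀ : ℝ := (τ/2) * (N+1) with hC₀
  have hC₀0 : 0 ≤ C₀ := by positivity
  have hgrow : ∀ n : ℕ, (τ/2) * n - C₀ ≤ dist x₀ (t ^ (n : ℤ) • x₀) := by
    intro n
    rw [zpow_natCast]
    rcases le_or_gt (n : ℝ) ((N : ℝ) + 1) with h | h
    · have h2 : (τ/2) * n ≤ C₀ := by
        rw [hC₀]; exact mul_le_mul_of_nonneg_left h (by linarith)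
      linarith [dist_nonneg (x := x₀) (y := t ^ n • x₀)]
    · have hn : N ≤ n := by exact_mod_cast le_of_lt (by linarith : (N:ℝ) < n)
      have hN' := hN n hn
      have hnpos : (0 : ℝ) < n := by linarith [Nat.cast_nonneg (α := ℝ) N]
      have h2 : (τ/2) * n < dist x₀ (t ^ n • x₀) := by
        have := (lt_div_iff₀ hnpos).mp hN'
        linarith [this]
      linarith
  have hgrowZ : ∀ k : ℤ, (τ/2) * ((|k| : ℤ) : ℝ) - C₀ ≤ dist x₀ (t ^ k • x₀) := by
    intro k
    rcases le_or_gt 0 k with h | h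
    · have e1 : ((|k| : ℤ) : ℝ) = ((k.toNat : ℕ) : ℝ) := by
        rw [abs_of_nonneg h]; norm_cast; exact (Int.toNat_of_nonneg h).symm
      have e2 : t ^ k = t ^ ((k.toNat : ℕ) : ℤ) := by rw [Int.toNat_of_nonneg h]
      rw [e1, e2]; exact hgrow k.toNat
    · have h1 := hsymm (-k)
      rw [neg_neg] at h1
      have h' : (0 : ℤ) ≤ -k := by linarith
      have e1 : ((|k| : ℤ) : ℝ) = (((-k).toNat : ℕ) : ℝ) := by
        rw [abs_of_neg h]; norm_cast; exact (Int.toNat_of_nonneg h').symm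
      have e2 : t ^ (-k) = t ^ (((-k).toNat : ℕ) : ℤ) := by rw [Int.toNat_of_nonneg h']
      rw [h1, e1, e2]; exact hgrow (-k).toNat
  -- the orbit sequence in coordinates
  set a : ℤ → ℝ := fun k => q (t ^ k • x₀) with ha
  have ha0 : a 0 = q x₀ := by simp [ha]
  set D : ℝ := K * dist x₀ (t • x₀) + K with hD
  have hD0 : 0 < D := by
    have := dist_nonneg (x := x₀) (y := t • x₀)
    nlinarith
  have hstepa : ∀ k : ℤ, |a (k + 1) - a k| ≤ D := by
    intro k
    have e : t ^ (k + 1) • x₀ = t ^ k • (t • x₀) := by rw [zpow_add_one, mul_smul]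
    have hdd : dist (t ^ (k + 1) • x₀) (t ^ k • x₀) = dist x₀ (t • x₀) := by
      rw [e, hisoL (t ^ k) (t • x₀) x₀, dist_comm]
    have h := hqup (t ^ (k + 1) • x₀) (t ^ k • x₀)
    rw [hdd] at h
    exact h
  have hlowa : ∀ k : ℤ, (1 / K) * dist x₀ (t ^ k • x₀) - K ≤ |a k - a 0| := by
    intro k
    have h := hqlow (t ^ k • x₀) x₀
    rw [dist_comm] at h
    have e : |q (t ^ k • x₀) - q x₀| = |a k - a 0| := by rw [ha0]
    rw [e] at h
    exact h
  have hqup' : ∀ x y : L, |(fun z => -(q z)) x - (fun z => -(q z)) y| ≤ K * dist x y + K := by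
    intro x y
    simp only
    rw [show -q x - -q y = -(q x - q y) by ring, abs_neg]
    exact hqup x y
  have hqlow' : ∀ x y : L, (1 / K) * dist x y - K ≤ |(fun z => -(q z)) x - (fun z => -(q z)) y| := by
    intro x y
    simp only
    rw [show -q x - -q y = -(q x - q y) by ring, abs_neg]
    exact hqlow x y
  have hopp : ∀ n : ℕ, 6 * (K * K) < τ * n - C₀ →
      (a n < a 0 ∧ a 0 < a (-(n : ℤ))) ∨ (a (-(n : ℤ)) < a 0 ∧ a 0 < a n) := by
    intro n hn
    set u : L := t ^ (-(n : ℤ)) • x₀ with hu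
    set w : L := t ^ ((n : ℤ)) • x₀ with hw
    have heq : dist x₀ u = dist x₀ w := hsymm n
    have hd2 : 6 * (K * K) < dist u w := by
      have h1 : dist u w = dist x₀ (t ^ ((n : ℤ) + n) • x₀) := by
        calc dist u w = dist (t ^ (n : ℤ) • u) (t ^ (n : ℤ) • w) := (hisoL _ u w).symm
          _ = dist x₀ (t ^ ((n : ℤ) + n) • x₀) := by
              rw [hu, hw, hcancel, smul_smul, ← zpow_add]
      have h2 := hgrowZ ((n : ℤ) + n)
      rw [abs_of_nonneg (by positivity)] at h2
      push_cast at h2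
      rw [h1]
      nlinarith
    have hq0 : q x₀ = a 0 := ha0.symm
    have hqu : q u = a (-(n : ℤ)) := rfl
    have hqw : q w = a (n : ℤ) := rfl
    have hnotup : ¬ (a 0 ≤ a (-(n : ℤ)) ∧ a 0 ≤ a (n : ℤ)) := by
      rintro ⟨hA, hB⟩
      rcases le_total (a (-(n : ℤ))) (a (n : ℤ)) with hc | hc
      · have h := quasiline_between hgeo K hK q hqup hqlow x₀ u w
          (by rw [hq0, hqu]; exact hA) (by rw [hqu, hqw]; exact hc)
        rw [heq] at h
        linarith
      · have h := quasiline_between hgeo K hK q hqup hqlow x₀ w u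
          (by rw [hq0, hqw]; exact hB) (by rw [hqu, hqw]; exact hc)
        rw [← heq, dist_comm w u] at h
        linarith
    have hnotdown : ¬ (a (-(n : ℤ)) ≤ a 0 ∧ a (n : ℤ) ≤ a 0) := by
      rintro ⟨hA, hB⟩
      rcases le_total (a (-(n : ℤ))) (a (n : ℤ)) with hc | hc
      · have h := quasiline_between hgeo K hK (fun z => -(q z)) hqup' hqlow' x₀ w u
          (by rw [hq0, hqw]; linarith) (by rw [hqu, hqw]; linarith)
        rw [← heq, dist_comm w u] at h
        linarith
      · have h := quasiline_between hgeo K hK (fun z => -(q z)) hqup' hqlow' x₀ u w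
          (by rw [hq0, hqu]; linarith) (by rw [hqu, hqw]; linarith)
        rw [heq] at h
        linarith
    rcases le_or_gt (a 0) (a (n : ℤ)) with h | h
    · right
      have h1 : a (-(n : ℤ)) < a 0 := by
        by_contra hc; push_neg at hc; exact hnotup ⟨hc, h⟩
      have h2 : a 0 < a (n : ℤ) := by
        by_contra hc; push_neg at hc; exact hnotdown ⟨h1.le, hc⟩
      exact ⟨h1, h2⟩
    · left
      have h1 : a 0 < a (-(n : ℤ)) := by
        by_contra hc; push_neg at hc; exact hnotdown ⟨hc, h.le⟩
      exact ⟨h, h1⟩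
  have hdense : ∀ r : ℝ, ∃ k : ℤ, |a k - r| ≤ D := by
    intro r
    obtain ⟨n, hn⟩ := exists_nat_gt
      (max ((6 * (K * K) + C₀ + 1) / τ) ((K * (|r - a 0| + K) + C₀) / (τ / 2)))
    have hn1 : (6 * (K * K) + C₀ + 1) / τ < n := lt_of_le_of_lt (le_max_left _ _) hn
    have hn2 : (K * (|r - a 0| + K) + C₀) / (τ / 2) < n := lt_of_le_of_lt (le_max_right _ _) hn
    have hc1 : 6 * (K * K) < τ * n - C₀ := by
      have := (div_lt_iff₀ hτpos).mp hn1
      nlinarith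
    have hc2 : K * (|r - a 0| + K) < (τ / 2) * n - C₀ := by
      have := (div_lt_iff₀ (by linarith : (0:ℝ) < τ / 2)).mp hn2
      nlinarith
    have hbig : |r - a 0| < (1 / K) * ((τ / 2) * n - C₀) - K := by
      have h4 : |r - a 0| + K < ((τ / 2) * n - C₀) / K :=
        (lt_div_iff₀ hKpos).mpr (by nlinarith)
      have h5 : (1 / K) * ((τ / 2) * n - C₀) = ((τ / 2) * n - C₀) / K := by ring
      linarith
    have hfar : ∀ k : ℤ, ((|k| : ℤ) : ℝ) = (n : ℝ) → |r - a 0| < |a k - a 0| := by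
      intro k hk
      have h5 := hlowa k
      have h6 := hgrowZ k
      rw [hk] at h6
      have h7 : (1 / K) * ((τ / 2) * n - C₀) ≤ (1 / K) * dist x₀ (t ^ k • x₀) :=
        mul_le_mul_of_nonneg_left (by linarith) (by positivity)
      linarith
    have hfarn : |r - a 0| < |a (n : ℤ) - a 0| := hfar (n : ℤ) (by simp)
    have hfarm : |r - a 0| < |a (-(n : ℤ)) - a 0| := hfar (-(n : ℤ)) (by simp)
    set f : ℕ → ℝ := fun i => a (-(n : ℤ) + i) with hf
    have hf0 : f 0 = a (-(n : ℤ)) := by simp [hf]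
    have hf2n : f (2 * n) = a (n : ℤ) := by
      simp only [hf]
      congr 1
      push_cast
      ring
    have hstepf : ∀ i, i < 2 * n → |f (i + 1) - f i| ≤ D := by
      intro i _
      have h := hstepa (-(n : ℤ) + i)
      have e : f (i + 1) = a ((-(n : ℤ) + i) + 1) := by
        simp only [hf]
        congr 1
        push_cast
        ring
      rw [e, hf]
      exact h
    rcases hopp n hc1 with ⟨hA, hB⟩ | ⟨hA, hB⟩
    · -- a n < a 0 < a (-n) : decreasing direction, use -f
      have hr1 : a (n : ℤ) < r := by
        rcases abs_cases (a (n : ℤ) - a 0) with ⟨e1, e1'⟩ | ⟨e1, e1'⟩ <;>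
          rcases abs_cases (r - a 0) with ⟨e2, e2'⟩ | ⟨e2, e2'⟩ <;> linarith
      have hr2 : r < a (-(n : ℤ)) := by
        rcases abs_cases (a (-(n : ℤ)) - a 0) with ⟨e1, e1'⟩ | ⟨e1, e1'⟩ <;>
          rcases abs_cases (r - a 0) with ⟨e2, e2'⟩ | ⟨e2, e2'⟩ <;> linarith
      obtain ⟨i, him, hi⟩ := discrete_ivt (fun i => -(f i)) (2 * n) D hD0.le
        (fun i hi => by
          rw [show -(f (i + 1)) - -(f i) = -(f (i + 1) - f i) by ring, abs_neg]
          exact hstepf i hi)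
        (-r) (by simp only [hf0]; linarith) (by simp only [hf2n]; linarith)
      refine ⟨-(n : ℤ) + i, ?_⟩
      have : |-(f i) - -r| = |f i - r| := by
        rw [show -(f i) - -r = -(f i - r) by ring, abs_neg]
      rw [this] at hi
      exact hi
    · -- a (-n) < a 0 < a n : increasing direction
      have hr1 : a (-(n : ℤ)) < r := by
        rcases abs_cases (a (-(n : ℤ)) - a 0) with ⟨e1, e1'⟩ | ⟨e1, e1'⟩ <;>
          rcases abs_cases (r - a 0) with ⟨e2, e2'⟩ | ⟨e2, e2'⟩ <;> linarith
      have hr2 : r < a (n : ℤ) := by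
        rcases abs_cases (a (n : ℤ) - a 0) with ⟨e1, e1'⟩ | ⟨e1, e1'⟩ <;>
          rcases abs_cases (r - a 0) with ⟨e2, e2'⟩ | ⟨e2, e2'⟩ <;> linarith
      obtain ⟨i, him, hi⟩ := discrete_ivt f (2 * n) D hD0.le hstepf r
        (by rw [hf0]; linarith) (by rw [hf2n]; linarith)
      exact ⟨-(n : ℤ) + i, hi⟩
  have horbit : ∀ z : L, ∃ k : ℤ, dist z (t ^ k • x₀) ≤ K * (D + K) := by
    intro z
    obtain ⟨k, hk⟩ := hdense (q z)
    refine ⟨k, ?_⟩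
    have h1 := hqlow z (t ^ k • x₀)
    have h2 : |q z - q (t ^ k • x₀)| ≤ D := by
      rw [abs_sub_comm]
      exact hk
    have h3 : (1 / K) * dist z (t ^ k • x₀) ≤ D + K := by linarith
    have h4 : dist z (t ^ k • x₀) / K ≤ D + K := by
      rw [div_eq_mul_one_div, mul_comm]; exact h3
    calc dist z (t ^ k • x₀) = dist z (t ^ k • x₀) / K * K := by field_simp
      _ ≤ (D + K) * K := mul_le_mul_of_nonneg_right h4 hKpos.le
      _ = K * (D + K) := by ring
  constructor
  · -- metrically proper
    intro p R
    have hball := wordBall_finite S hSfin hSgen ⌊R⌋₊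
    have hfiber : ∀ h : G,
        {e : E | ((wordLength S (p.1⁻¹ * (φ e * p.1)) : ℝ) + dist p.2 (e • p.2) ≤ R) ∧
          p.1⁻¹ * (φ e * p.1) = h}.Finite := by
      intro h
      set F := {e : E | ((wordLength S (p.1⁻¹ * (φ e * p.1)) : ℝ) + dist p.2 (e • p.2) ≤ R) ∧
          p.1⁻¹ * (φ e * p.1) = h} with hF
      rcases Set.eq_empty_or_nonempty F with hFe | ⟨e₀, he₀⟩
      · rw [hFe]; exact Set.finite_empty
      · set B : ℤ := ⌈(C₀ + 2 * dist x₀ p.2 + 2 * R) * (2 / τ)⌉ with hB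
        apply Set.Finite.subset (Set.Finite.image (fun k : ℤ => e₀ * t ^ k)
          (Set.finite_Icc (-B) B))
        intro e he
        have hφe : φ e = φ e₀ := by
          have h3 : p.1⁻¹ * (φ e * p.1) = p.1⁻¹ * (φ e₀ * p.1) := by rw [he.2, he₀.2]
          exact mul_right_cancel (mul_left_cancel h3)
        have hkmem : e₀⁻¹ * e ∈ Subgroup.zpowers t := by
          rw [← hker]
          have : φ (e₀⁻¹ * e) = 1 := by rw [map_mul, map_inv, hφe, inv_mul_cancel]
          exact this
        obtain ⟨k, hk⟩ := Subgroup.mem_zpowers_iff.mp hkmem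
        have hek : e = e₀ * t ^ k := by rw [hk, ← mul_assoc, mul_inv_cancel, one_mul]
        have hwnn : (0 : ℝ) ≤ (wordLength S (p.1⁻¹ * (φ e * p.1)) : ℝ) := Nat.cast_nonneg _
        have hwnn0 : (0 : ℝ) ≤ (wordLength S (p.1⁻¹ * (φ e₀ * p.1)) : ℝ) := Nat.cast_nonneg _
        have hde : dist p.2 (e • p.2) ≤ R := by have := he.1; linarith
        have hde0 : dist p.2 (e₀ • p.2) ≤ R := by have := he₀.1; linarith
        have hdy : dist p.2 (t ^ k • p.2) ≤ 2 * R := by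
          have e1 : dist (e₀ • p.2) (e • p.2) = dist p.2 (t ^ k • p.2) := by
            rw [hek, mul_smul, hisoL]
          calc dist p.2 (t ^ k • p.2) = dist (e₀ • p.2) (e • p.2) := e1.symm
            _ ≤ dist (e₀ • p.2) p.2 + dist p.2 (e • p.2) := dist_triangle _ _ _
            _ ≤ R + R := by rw [dist_comm (e₀ • p.2) p.2]; linarith
            _ = 2 * R := by ring
        have hdx : dist x₀ (t ^ k • x₀) ≤ 2 * dist x₀ p.2 + 2 * R := by
          calc dist x₀ (t ^ k • x₀)
              ≤ dist x₀ p.2 + dist p.2 (t ^ k • p.2) + dist (t ^ k • p.2) (t ^ k • x₀) :=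
                dist_triangle4 x₀ p.2 (t ^ k • p.2) (t ^ k • x₀)
            _ = dist x₀ p.2 + dist p.2 (t ^ k • p.2) + dist p.2 x₀ := by rw [hisoL]
            _ ≤ 2 * dist x₀ p.2 + 2 * R := by rw [dist_comm p.2 x₀]; linarith
        have hkb : ((|k| : ℤ) : ℝ) ≤ (C₀ + 2 * dist x₀ p.2 + 2 * R) * (2 / τ) := by
          have h5 := hgrowZ k
          have h6 : (τ / 2) * ((|k| : ℤ) : ℝ) ≤ C₀ + 2 * dist x₀ p.2 + 2 * R := by linarith
          have h7 : (2 / τ) * ((τ / 2) * ((|k| : ℤ) : ℝ))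
              ≤ (2 / τ) * (C₀ + 2 * dist x₀ p.2 + 2 * R) :=
            mul_le_mul_of_nonneg_left h6 (by positivity)
          have h8 : (2 / τ) * (τ / 2) = 1 := by field_simp
          calc ((|k| : ℤ) : ℝ) = (2 / τ) * ((τ / 2) * ((|k| : ℤ) : ℝ)) := by
                rw [← mul_assoc, h8, one_mul]
            _ ≤ (2 / τ) * (C₀ + 2 * dist x₀ p.2 + 2 * R) := h7
            _ = (C₀ + 2 * dist x₀ p.2 + 2 * R) * (2 / τ) := by ring
        refine ⟨k, ?_, hek.symm⟩
        have habk : |k| ≤ B := by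
          have := le_trans hkb (Int.le_ceil _)
          exact_mod_cast this
        exact Set.mem_Icc.mpr (abs_le.mp habk)
    apply Set.Finite.subset (Set.Finite.biUnion hball (fun h _ => hfiber h))
    intro e he
    have hmemball : p.1⁻¹ * (φ e * p.1) ∈ {g : G | wordLength S g ≤ ⌊R⌋₊} := by
      have h1 : (wordLength S (p.1⁻¹ * (φ e * p.1)) : ℝ) ≤ R := by
        have := dist_nonneg (x := p.2) (y := e • p.2)
        have h2 : (wordLength S (p.1⁻¹ * (φ e * p.1)) : ℝ) + dist p.2 (e • p.2) ≤ R := he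
        linarith
      exact Nat.le_floor h1
    exact Set.mem_biUnion hmemball ⟨he, rfl⟩
  · -- cobounded
    refine ⟨K * (D + K), ?_⟩
    intro p
    obtain ⟨e₀, he₀⟩ := hsurj p.1
    obtain ⟨k, hk⟩ := horbit (e₀⁻¹ • p.2)
    refine ⟨e₀ * t ^ k, ?_⟩
    have hφ1 : p.1⁻¹ * φ (e₀ * t ^ k) = 1 := by
      rw [map_mul, he₀, hφtk, mul_one, inv_mul_cancel]
    rw [hφ1]
    have hw1 : wordLength S (1 : G) = 0 :=
      Nat.sInf_eq_zero.mpr (Or.inl ⟨[], rfl, by simp, rfl⟩)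
    rw [hw1]
    have hdist : dist p.2 ((e₀ * t ^ k) • x₀) = dist (e₀⁻¹ • p.2) (t ^ k • x₀) := by
      rw [mul_smul, ← hisoL e₀ (e₀⁻¹ • p.2) (t ^ k • x₀), smul_inv_smul]
    rw [hdist]
    push_cast
    linarith
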